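/- Let X and Y be arbitrary Banach spaces and T : X → Y a bounded linear operator. Then for every n ∈ ℕ, the n-th Kolmogorov number of the adjoint equals the n-th Gelfand number of T: δₙ(T*) = cₙ(T). -/

import Mathlib

open NormedSpace Metric Filter Topology
open scoped ENNReal Pointwise

/-- The Banach-space adjoint (dual) operator `T* : Y* → X*`, `(T* f)(x) = f (T x)`. -/
noncomputable def adjointCLM {X Y : Type*} [NormedAddCommGroup X] [NormedSpace ℝ X]
    [NormedAddCommGroup Y] [NormedSpace ℝ Y] (T : X →L[ℝ] Y) :
    StrongDual ℝ Y →L[ℝ] StrongDual ℝ X :=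
  (ContinuousLinearMap.compSL X Y ℝ (RingHom.id ℝ) (RingHom.id ℝ)).flip T

/-- The canonical quotient map `Z → Z ⧸ G` as a continuous linear map. -/
noncomputable def quotCLM {Z : Type*} [NormedAddCommGroup Z] [NormedSpace ℝ Z]
    (G : Submodule ℝ Z) : Z →L[ℝ] Z ⧸ G :=
  ⟨G.mkQ, continuous_quot_mk⟩

/-- The `n`-th Kolmogorov number: `δₙ(T) = inf {‖Q_G ∘ T‖ : G ⊆ Y, dim G ≤ n}`. -/
noncomputable def kolmogorovNumber {X Y : Type*} [NormedAddCommGroup X] [NormedSpace ℝ X]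
    [NormedAddCommGroup Y] [NormedSpace ℝ Y] (n : ℕ) (T : X →L[ℝ] Y) : ℝ :=
  sInf {c : ℝ | ∃ G : Submodule ℝ Y, FiniteDimensional ℝ G ∧
    Module.finrank ℝ G ≤ n ∧ c = ‖(quotCLM G).comp T‖}

/-- The `n`-th Gelfand number: `cₙ(T) = inf {ε > 0 : ∃ a₁,…,aₙ ∈ X*,
    ‖T x‖ ≤ max_i |aᵢ(x)| + ε ‖x‖ for all x}`. -/
noncomputable def gelfandNumber {X Y : Type*} [NormedAddCommGroup X] [NormedSpace ℝ X]
    [NormedAddCommGroup Y] [NormedSpace ℝ Y] (n : ℕ) (T : X →L[ℝ] Y) : ℝ :=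
  sInf {ε : ℝ | 0 < ε ∧ ∃ a : Fin n → StrongDual ℝ X,
    ∀ x : X, ‖T x‖ ≤ (⨆ i, |a i x|) + ε * ‖x‖}

section Aux
variable {X Y : Type*} [NormedAddCommGroup X] [NormedSpace ℝ X]
  [NormedAddCommGroup Y] [NormedSpace ℝ Y]

lemma adjointCLM_apply (T : X →L[ℝ] Y) (f : StrongDual ℝ Y) (x : X) :
    adjointCLM T f x = f (T x) := rfl

lemma quotCLM_apply {Z : Type*} [NormedAddCommGroup Z] [NormedSpace ℝ Z]
    (G : Submodule ℝ Z) (z : Z) : quotCLM G z = Submodule.Quotient.mk z := rfl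

/-- Key lemma: if `T` is small on the joint kernel of `b i`, then a Gelfand-type
inequality holds with constant `c + θ` for any `θ > 0`. -/
lemma gelfand_witness {n : ℕ} (T : X →L[ℝ] Y) (b : Fin n → StrongDual ℝ X) {c : ℝ} (hc : 0 ≤ c)
    (hsmall : ∀ x : X, (∀ i, b i x = 0) → ‖T x‖ ≤ c * ‖x‖) {θ : ℝ} (hθ : 0 < θ) :
    ∃ a : Fin n → StrongDual ℝ X, ∀ x : X, ‖T x‖ ≤ (⨆ i, |a i x|) + (c + θ) * ‖x‖ := by
  classical
  set Φ : X →ₗ[ℝ] (Fin n → ℝ) := LinearMap.pi (fun i => (b i : X →ₗ[ℝ] ℝ)) with hΦ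
  set N : Submodule ℝ X := LinearMap.ker Φ with hN
  have hmemN : ∀ x : X, x ∈ N ↔ ∀ i, b i x = 0 := by
    intro x
    simp [hN, hΦ, LinearMap.mem_ker, funext_iff, LinearMap.pi_apply]
  have hcont : Continuous Φ := continuous_pi fun i => (b i).continuous
  haveI hclosed : IsClosed (N : Set X) := by
    have : (N : Set X) = Φ ⁻¹' {0} := by ext x; simp [hN, LinearMap.mem_ker]
    rw [this]; exact isClosed_singleton.preimage hcont
  set ψ : (X ⧸ N) →ₗ[ℝ] (Fin n → ℝ) := N.liftQ Φ le_rfl with hψ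
  have hker : LinearMap.ker ψ = ⊥ := Submodule.ker_liftQ_eq_bot' N Φ rfl
  haveI : FiniteDimensional ℝ (X ⧸ N) :=
    FiniteDimensional.of_injective ψ (LinearMap.ker_eq_bot.1 hker)
  obtain ⟨K, hK0, hK⟩ := ψ.exists_antilipschitzWith hker
  have hmk : ∀ x : X, ‖(Submodule.Quotient.mk x : X ⧸ N)‖ ≤ K * (⨆ i, |b i x|) := by
    intro x
    have h1 : ‖(Submodule.Quotient.mk x : X ⧸ N)‖ ≤ K * ‖ψ (Submodule.Quotient.mk x)‖ := by
      simpa [dist_zero_right, map_zero] using hK.le_mul_dist (Submodule.Quotient.mk x) 0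
    have h2 : ‖ψ (Submodule.Quotient.mk x)‖ ≤ ⨆ i, |b i x| := by
      have hnn : 0 ≤ ⨆ i, |b i x| := Real.iSup_nonneg fun i => abs_nonneg _
      rw [pi_norm_le_iff_of_nonneg hnn]
      intro i
      have hv : ψ (Submodule.Quotient.mk x) i = b i x := rfl
      rw [hv, Real.norm_eq_abs]
      exact le_ciSup (f := fun j => |b j x|) (Set.Finite.bddAbove (Set.finite_range _)) i
    calc ‖(Submodule.Quotient.mk x : X ⧸ N)‖ ≤ K * ‖ψ (Submodule.Quotient.mk x)‖ := h1
      _ ≤ K * (⨆ i, |b i x|) := by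
          exact mul_le_mul_of_nonneg_left h2 K.coe_nonneg
  refine ⟨fun i => ((‖T‖ + c) * K) • b i, fun x => ?_⟩
  have hC0 : (0:ℝ) ≤ (‖T‖ + c) * K :=
    mul_nonneg (add_nonneg (norm_nonneg _) hc) K.coe_nonneg
  have hSnn : 0 ≤ ⨆ i, |b i x| := Real.iSup_nonneg fun i => abs_nonneg _
  have hsup : (⨆ i, |(((‖T‖ + c) * K) • b i) x|) = ((‖T‖ + c) * K) * ⨆ i, |b i x| := by
    rw [Real.mul_iSup_of_nonneg hC0]
    congr 1; funext i
    simp [abs_mul, abs_of_nonneg hC0]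
  rw [hsup]
  by_cases hx : x = 0
  · subst hx
    have hS : 0 ≤ ⨆ i, |b i (0:X)| := Real.iSup_nonneg fun i => abs_nonneg _
    have h00 : ‖T (0:X)‖ = 0 := by rw [map_zero, norm_zero]
    rw [h00, norm_zero, mul_zero, add_zero]
    exact mul_nonneg hC0 hS
  · have hxpos : 0 < ‖x‖ := norm_pos_iff.2 hx
    have hs : 0 < θ * ‖x‖ / (‖T‖ + c + 1) := by positivity
    obtain ⟨m, hmEq, hmlt⟩ :=
      Submodule.Quotient.norm_mk_lt (Submodule.Quotient.mk x : X ⧸ N) hs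
    have hd : x - m ∈ N := by
      have := (Submodule.Quotient.eq N).1 hmEq.symm
      exact this
    have hdz : ∀ i, b i (x - m) = 0 := (hmemN _).1 hd
    have h1 : ‖T x‖ ≤ ‖T‖ * ‖m‖ + c * ‖x - m‖ := by
      have hTx : T x = T m + T (x - m) := by rw [← map_add, add_sub_cancel]
      calc ‖T x‖ = ‖T m + T (x - m)‖ := by rw [hTx]
        _ ≤ ‖T m‖ + ‖T (x - m)‖ := norm_add_le _ _
        _ ≤ ‖T‖ * ‖m‖ + c * ‖x - m‖ := add_le_add (T.le_opNorm m) (hsmall _ hdz)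
    have h2 : ‖x - m‖ ≤ ‖x‖ + ‖m‖ := norm_sub_le _ _
    have h3 : ‖m‖ ≤ K * (⨆ i, |b i x|) + θ * ‖x‖ / (‖T‖ + c + 1) :=
      hmlt.le.trans (add_le_add_left (hmk x) _)
    have hdiv : (‖T‖ + c) * (θ * ‖x‖ / (‖T‖ + c + 1)) ≤ θ * ‖x‖ := by
      have hD : (0:ℝ) < ‖T‖ + c + 1 := by positivity
      have hr1 : (‖T‖ + c) / (‖T‖ + c + 1) ≤ 1 := by
        rw [div_le_one hD]; linarith
      have hr2 : (‖T‖ + c) * (θ * ‖x‖ / (‖T‖ + c + 1))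
          = (θ * ‖x‖) * ((‖T‖ + c) / (‖T‖ + c + 1)) := by ring
      rw [hr2]
      nlinarith [mul_pos hθ hxpos]
    have f1 : c * ‖x - m‖ ≤ c * (‖x‖ + ‖m‖) := mul_le_mul_of_nonneg_left h2 hc
    have f2 : (‖T‖ + c) * ‖m‖ ≤ (‖T‖ + c) * (K * (⨆ i, |b i x|) + θ * ‖x‖ / (‖T‖ + c + 1)) :=
      mul_le_mul_of_nonneg_left h3 (add_nonneg (norm_nonneg _) hc)
    linarith [h1, f1, f2, hdiv]
end Aux
section Aux2
variable {X Y : Type*} [NormedAddCommGroup X] [NormedSpace ℝ X]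
  [NormedAddCommGroup Y] [NormedSpace ℝ Y]

lemma quot_norm_le {n : ℕ} (T : X →L[ℝ] Y) (a : Fin n → StrongDual ℝ X) {ε : ℝ} (hε : 0 ≤ ε)
    (h : ∀ x : X, ‖T x‖ ≤ (⨆ i, |a i x|) + ε * ‖x‖) :
    ‖(quotCLM (Submodule.span ℝ (Set.range a))).comp (adjointCLM T)‖ ≤ ε := by
  classical
  set G : Submodule ℝ (StrongDual ℝ X) := Submodule.span ℝ (Set.range a) with hG
  refine ContinuousLinearMap.opNorm_le_bound _ hε fun f => ?_
  set N : Submodule ℝ X := ⨅ i, LinearMap.ker ((a i : X →ₗ[ℝ] ℝ)) with hNdef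
  have hmemN : ∀ x : X, x ∈ N ↔ ∀ i, a i x = 0 := by
    intro x; simp [hNdef, LinearMap.mem_ker, Submodule.mem_iInf]
  set r : N →L[ℝ] ℝ := (adjointCLM T f).comp N.subtypeL with hrdef
  have hr : ‖r‖ ≤ ε * ‖f‖ := by
    refine ContinuousLinearMap.opNorm_le_bound _ (by positivity) fun z => ?_
    have hz0 : (⨆ i, |a i (z : X)|) ≤ 0 :=
      Real.iSup_le (fun i => by rw [(hmemN z).1 z.2 i, abs_zero]) le_rfl
    have hTz : ‖T (z : X)‖ ≤ ε * ‖(z : X)‖ := by have := h (z : X); linarith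
    have hzn : ‖z‖ = ‖(z : X)‖ := rfl
    calc ‖r z‖ = ‖f (T (z : X))‖ := rfl
      _ ≤ ‖f‖ * ‖T (z : X)‖ := f.le_opNorm _
      _ ≤ ‖f‖ * (ε * ‖(z : X)‖) := mul_le_mul_of_nonneg_left hTz (norm_nonneg f)
      _ = ε * ‖f‖ * ‖z‖ := by rw [hzn]; ring
  obtain ⟨g, hg, hgnorm⟩ := exists_extension_norm_eq N r
  have hgle : ‖g‖ ≤ ε * ‖f‖ := hgnorm ▸ hr
  have hmem : adjointCLM T f - g ∈ G := by
    have hker : (⨅ i, LinearMap.ker ((a i : X →ₗ[ℝ] ℝ)))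
        ≤ LinearMap.ker ((adjointCLM T f - g : StrongDual ℝ X) : X →ₗ[ℝ] ℝ) := by
      intro x hx
      have hx' : x ∈ N := hx
      have hgx : g x = adjointCLM T f x := hg ⟨x, hx'⟩
      simp only [LinearMap.mem_ker, ContinuousLinearMap.coe_coe,
        ContinuousLinearMap.sub_apply]
      rw [hgx]; ring
    have hspan := mem_span_of_iInf_ker_le_ker (𝕜 := ℝ)
      (L := fun i => ((a i : X →ₗ[ℝ] ℝ))) hker
    -- transfer from linear maps back to continuous linear maps
    set ι : (X →L[ℝ] ℝ) →ₗ[ℝ] (X →ₗ[ℝ] ℝ) := ContinuousLinearMap.coeLM ℝ with hι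
    have hrange : Set.range (fun i => ((a i : X →ₗ[ℝ] ℝ))) = ι '' Set.range a := by
      rw [← Set.range_comp]; rfl
    rw [hrange, ← Submodule.map_span] at hspan
    obtain ⟨u, huG, huEq⟩ := hspan
    have : u = adjointCLM T f - g := by
      apply ContinuousLinearMap.coe_injective
      exact huEq
    rwa [this] at huG
  have hQ : (quotCLM G).comp (adjointCLM T) f = Submodule.Quotient.mk g := by
    show (Submodule.Quotient.mk (adjointCLM T f) : StrongDual ℝ X ⧸ G) = Submodule.Quotient.mk g
    rw [Submodule.Quotient.eq]
    exact hmem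
  rw [hQ]
  exact le_trans (Submodule.Quotient.norm_mk_le G g) hgle
end Aux2
section Aux3
variable {X Y : Type*} [NormedAddCommGroup X] [NormedSpace ℝ X]
  [NormedAddCommGroup Y] [NormedSpace ℝ Y]

/-- A finite-dimensional subspace of rank `≤ n` is spanned by `n` of its elements. -/
lemma exists_spanning_fun {V : Type*} [AddCommGroup V] [Module ℝ V] (G : Submodule ℝ V)
    [FiniteDimensional ℝ G] {n : ℕ} (h : Module.finrank ℝ G ≤ n) :
    ∃ b : Fin n → V, (∀ i, b i ∈ G) ∧ G ≤ Submodule.span ℝ (Set.range b) := by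
  classical
  haveI : Module.Free ℝ G := Module.Free.of_divisionRing ℝ ↥G
  set B := Module.finBasis ℝ ↥G with hB
  refine ⟨fun i => if hi : (i : ℕ) < Module.finrank ℝ ↥G then (B ⟨(i : ℕ), hi⟩ : V) else 0,
    fun i => ?_, ?_⟩
  · by_cases hi : (i : ℕ) < Module.finrank ℝ ↥G
    · simp only [dif_pos hi]; exact (B ⟨(i : ℕ), hi⟩).2
    · simp only [dif_neg hi]; exact G.zero_mem
  · intro g hg
    have h1 : (⟨g, hg⟩ : G) ∈ Submodule.span ℝ (Set.range B) := by rw [B.span_eq]; trivial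
    have h2 : g ∈ Submodule.map G.subtype (Submodule.span ℝ (Set.range B)) := ⟨_, h1, rfl⟩
    rw [Submodule.map_span] at h2
    refine Submodule.span_mono ?_ h2
    rintro _ ⟨_, ⟨j, rfl⟩, rfl⟩
    refine ⟨⟨(j : ℕ), lt_of_lt_of_le j.2 h⟩, ?_⟩
    simp only [dif_pos j.2, Fin.eta, Submodule.coe_subtype]

/-- If every functional in `G` kills `x`, then `‖T x‖` is controlled by the norm of the
quotient composition. -/
lemma norm_apply_le_quot (T : X →L[ℝ] Y) (G : Submodule ℝ (StrongDual ℝ X)) (x : X)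
    (hGx : ∀ g ∈ G, (g : StrongDual ℝ X) x = 0) :
    ‖T x‖ ≤ ‖(quotCLM G).comp (adjointCLM T)‖ * ‖x‖ := by
  refine NormedSpace.norm_le_dual_bound ℝ (T x)
    (mul_nonneg (ContinuousLinearMap.opNorm_nonneg _) (norm_nonneg _)) fun f => ?_
  have key : ∀ η : ℝ, 0 < η →
      ‖f (T x)‖ ≤ (‖(quotCLM G) (adjointCLM T f)‖ + η) * ‖x‖ := by
    intro η hη
    obtain ⟨w, hwEq, hwlt⟩ :=
      Submodule.Quotient.norm_mk_lt (Submodule.Quotient.mk (adjointCLM T f) : StrongDual ℝ X ⧸ G) hη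
    have hdiff : adjointCLM T f - w ∈ G := by
      have h1 : w - adjointCLM T f ∈ G := (Submodule.Quotient.eq G).1 hwEq
      simpa using G.neg_mem h1
    have hval : (adjointCLM T f) x = w x := by
      have h0 := hGx _ hdiff
      have : (adjointCLM T f) x - w x = 0 := by simpa using h0
      linarith
    have hfx : f (T x) = (adjointCLM T f) x := rfl
    calc ‖f (T x)‖ = ‖w x‖ := by rw [hfx, hval]
      _ ≤ ‖w‖ * ‖x‖ := w.le_opNorm x
      _ ≤ (‖(quotCLM G) (adjointCLM T f)‖ + η) * ‖x‖ :=
        mul_le_mul_of_nonneg_right hwlt.le (norm_nonneg x)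
  have h2 : ‖f (T x)‖ ≤ ‖(quotCLM G) (adjointCLM T f)‖ * ‖x‖ := by
    rcases eq_or_lt_of_le (norm_nonneg x) with h0 | h0
    · have h1 := key 1 one_pos
      rw [← h0] at h1 ⊢
      simpa using h1
    · refine le_of_forall_pos_le_add fun δ hδ => ?_
      have hk := key (δ / ‖x‖) (by positivity)
      have hcan : (δ / ‖x‖) * ‖x‖ = δ := div_mul_cancel₀ _ h0.ne'
      nlinarith [hk, hcan]
  have h3 : ‖(quotCLM G) (adjointCLM T f)‖ ≤ ‖(quotCLM G).comp (adjointCLM T)‖ * ‖f‖ :=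
    ((quotCLM G).comp (adjointCLM T)).le_opNorm f
  calc ‖f (T x)‖ ≤ ‖(quotCLM G) (adjointCLM T f)‖ * ‖x‖ := h2
    _ ≤ (‖(quotCLM G).comp (adjointCLM T)‖ * ‖f‖) * ‖x‖ :=
      mul_le_mul_of_nonneg_right h3 (norm_nonneg x)
    _ = (‖(quotCLM G).comp (adjointCLM T)‖ * ‖x‖) * ‖f‖ := by ring

end Aux3

variable {X Y : Type*} [NormedAddCommGroup X] [NormedSpace ℝ X] [CompleteSpace X]
  [NormedAddCommGroup Y] [NormedSpace ℝ Y] [CompleteSpace Y]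

set_option linter.unusedSectionVars false in
set_option maxHeartbeats 1000000 in
/-- For arbitrary Banach spaces, the Kolmogorov numbers of the adjoint equal the
Gelfand numbers of the operator: `δₙ(T*) = cₙ(T)`. -/
theorem kolmogorovNumber_adjoint_eq_gelfandNumber (T : X →L[ℝ] Y) (n : ℕ) :
    kolmogorovNumber n (adjointCLM T) = gelfandNumber n T := by
  classical
  unfold kolmogorovNumber gelfandNumber
  have hKbdd : BddBelow {c : ℝ | ∃ G : Submodule ℝ (StrongDual ℝ X), FiniteDimensional ℝ G ∧
      Module.finrank ℝ G ≤ n ∧ c = ‖(quotCLM G).comp (adjointCLM T)‖} :=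
    ⟨0, by rintro c ⟨G, _, _, rfl⟩; exact ContinuousLinearMap.opNorm_nonneg _⟩
  have hSbdd : BddBelow {ε : ℝ | 0 < ε ∧ ∃ a : Fin n → StrongDual ℝ X,
      ∀ x : X, ‖T x‖ ≤ (⨆ i, |a i x|) + ε * ‖x‖} :=
    ⟨0, fun ε hε => hε.1.le⟩
  have hSne : {ε : ℝ | 0 < ε ∧ ∃ a : Fin n → StrongDual ℝ X,
      ∀ x : X, ‖T x‖ ≤ (⨆ i, |a i x|) + ε * ‖x‖}.Nonempty := by
    refine ⟨‖T‖ + 1, by positivity, 0, fun x => ?_⟩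
    have h1 : 0 ≤ ⨆ i : Fin n, |(0 : StrongDual ℝ X) x| := Real.iSup_nonneg fun i => abs_nonneg _
    have h2 := T.le_opNorm x
    have h3 := norm_nonneg x
    simp only [Pi.zero_apply]
    linarith
  have hKne : {c : ℝ | ∃ G : Submodule ℝ (StrongDual ℝ X), FiniteDimensional ℝ G ∧
      Module.finrank ℝ G ≤ n ∧ c = ‖(quotCLM G).comp (adjointCLM T)‖}.Nonempty :=
    ⟨‖(quotCLM (⊥ : Submodule ℝ (StrongDual ℝ X))).comp (adjointCLM T)‖, ⊥, inferInstance,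
      by simp, rfl⟩
  refine le_antisymm (le_csInf hSne ?_) (le_csInf hKne ?_)
  · -- kolmogorov ≤ each Gelfand witness
    rintro ε ⟨hε, a, ha⟩
    have hle := quot_norm_le T a hε.le ha
    refine le_trans (csInf_le hKbdd ?_) hle
    refine ⟨Submodule.span ℝ (Set.range a),
      FiniteDimensional.span_of_finite ℝ (Set.finite_range a), ?_, rfl⟩
    haveI : Fintype (Set.range a) := Set.fintypeRange a
    refine le_trans (finrank_span_le_card (R := ℝ) (Set.range a)) ?_
    calc (Set.range a).toFinset.card = Fintype.card (Set.range a) := Set.toFinset_card _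
      _ ≤ Fintype.card (Fin n) := Fintype.card_range_le a
      _ = n := Fintype.card_fin n
  · -- gelfand ≤ each Kolmogorov witness
    rintro c ⟨G, hGfd, hGrank, rfl⟩
    haveI := hGfd
    refine le_of_forall_pos_le_add fun θ hθ => ?_
    obtain ⟨b, hbG, hbspan⟩ := exists_spanning_fun G hGrank
    have hsmall : ∀ x : X, (∀ i, b i x = 0) →
        ‖T x‖ ≤ ‖(quotCLM G).comp (adjointCLM T)‖ * ‖x‖ := by
      intro x hbx
      refine norm_apply_le_quot T G x fun g hg => ?_
      let ev : StrongDual ℝ X →ₗ[ℝ] ℝ :=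
        { toFun := fun u => u x
          map_add' := fun u v => rfl
          map_smul' := fun t u => rfl }
      have hle : Submodule.span ℝ (Set.range b) ≤ LinearMap.ker ev := by
        rw [Submodule.span_le]
        rintro _ ⟨i, rfl⟩
        exact hbx i
      exact hle (hbspan hg)
    obtain ⟨a, ha⟩ := gelfand_witness T b (ContinuousLinearMap.opNorm_nonneg _) hsmall hθ
    refine csInf_le hSbdd ?_
    have hpos : 0 < ‖(quotCLM G).comp (adjointCLM T)‖ + θ := by positivity
    exact ⟨hpos, a, ha⟩
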